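/- If f : [a,b] → ℝ is convex and g : [a,b] → ℝ is non-negative, integrable, and symmetric about (a+b)/2 (i.e. g(x) = g(a+b-x) for all x ∈ [a,b]), then f((a+b)/2) ∫_a^b g(x) dx ≤ ∫_a^b f(x) g(x) dx ≤ ((f(a)+f(b))/2) ∫_a^b g(x) dx. -/

import Mathlib

open MeasureTheory intervalIntegral

theorem hermite_hadamard_fejer (a b : ℝ) (hab : a < b) (f g : ℝ → ℝ)
    (hconv : ConvexOn ℝ (Set.Icc a b) f)
    (hg_nonneg : ∀ x ∈ Set.Icc a b, 0 ≤ g x)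
    (hg_int : IntervalIntegrable g volume a b)
    (hg_symm : ∀ x ∈ Set.Icc a b, g x = g (a + b - x))
    (hfg_int : IntervalIntegrable (fun x => f x * g x) volume a b) :
    f ((a + b) / 2) * ∫ x in a..b, g x ≤ ∫ x in a..b, f x * g x ∧
      (∫ x in a..b, f x * g x) ≤ ((f a + f b) / 2) * ∫ x in a..b, g x := by
  have hmem : ∀ x ∈ Set.Icc a b, a + b - x ∈ Set.Icc a b := by
    intro x hx; obtain ⟨h1, h2⟩ := hx; constructor <;> linarith
  have key2 : ∀ x ∈ Set.Icc a b, 2 * f ((a + b) / 2) ≤ f x + f (a + b - x) := by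
    intro x hx
    have := hconv.2 hx (hmem x hx) (by norm_num : (0:ℝ) ≤ 1/2)
      (by norm_num : (0:ℝ) ≤ 1/2) (by norm_num)
    simp only [smul_eq_mul] at this
    have hm : (1/2 : ℝ) * x + (1/2 : ℝ) * (a + b - x) = (a + b) / 2 := by ring
    rw [hm] at this
    linarith
  have key1 : ∀ x ∈ Set.Icc a b, f x + f (a + b - x) ≤ f a + f b := by
    intro x hx
    obtain ⟨h1, h2⟩ := hx
    have hba : (0:ℝ) < b - a := by linarith
    set t := (b - x) / (b - a) with ht
    set s := (x - a) / (b - a) with hs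
    have htn : 0 ≤ t := div_nonneg (by linarith) hba.le
    have hsn : 0 ≤ s := div_nonneg (by linarith) hba.le
    have hts : t + s = 1 := by rw [ht, hs, ← add_div, div_eq_one_iff_eq hba.ne']; ring
    have hx1 : t * a + s * b = x := by rw [ht, hs, div_mul_eq_mul_div, div_mul_eq_mul_div, ← add_div, div_eq_iff hba.ne']; ring
    have hx2 : s * a + t * b = a + b - x := by rw [ht, hs, div_mul_eq_mul_div, div_mul_eq_mul_div, ← add_div, div_eq_iff hba.ne']; ring
    have e1 := hconv.2 (Set.left_mem_Icc.2 hab.le) (Set.right_mem_Icc.2 hab.le) htn hsn hts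
    have e2 := hconv.2 (Set.left_mem_Icc.2 hab.le) (Set.right_mem_Icc.2 hab.le) hsn htn (by linarith)
    simp only [smul_eq_mul] at e1 e2
    rw [hx1] at e1; rw [hx2] at e2
    have hsum : t * f a + s * f b + (s * f a + t * f b) = (t + s) * (f a + f b) := by ring
    rw [hts, one_mul] at hsum
    linarith
  -- substitution
  have hsub : (∫ x in a..b, f (a + b - x) * g x) = ∫ x in a..b, f x * g x := by
    have h1 : (∫ x in a..b, f (a + b - x) * g x)
        = ∫ x in a..b, f (a + b - x) * g (a + b - x) := by
      apply intervalIntegral.integral_congr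
      intro x hx
      rw [Set.uIcc_of_le hab.le] at hx
      show f (a + b - x) * g x = f (a + b - x) * g (a + b - x)
      rw [← hg_symm x hx]
    have h2 := intervalIntegral.integral_comp_sub_left (a := a) (b := b)
      (fun x => f x * g x) (a + b)
    simp only [add_sub_cancel_right, add_sub_cancel_left] at h2
    rw [h1]
    exact h2
  -- integrability of reflected function
  have h_fcg : IntervalIntegrable (fun x => f (a + b - x) * g x) volume a b := by
    have h0 := (hfg_int.comp_sub_left (a + b)).symm
    simp only [add_sub_cancel_right, add_sub_cancel_left] at h0
    rw [intervalIntegrable_iff_integrableOn_Ioc_of_le hab.le] at h0 ⊢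
    apply h0.congr_fun _ measurableSet_Ioc
    intro x hx
    have hx' : x ∈ Set.Icc a b := Set.Ioc_subset_Icc_self hx
    simp only
    rw [← hg_symm x hx']
  have hsum_int : IntervalIntegrable (fun x => f x * g x + f (a + b - x) * g x) volume a b :=
    hfg_int.add h_fcg
  have hIg_nonneg : ∀ x ∈ Set.Icc a b, True := fun _ _ => trivial
  -- left inequality
  have hL : (∫ x in a..b, 2 * f ((a + b) / 2) * g x)
      ≤ ∫ x in a..b, (f x * g x + f (a + b - x) * g x) := by
    apply intervalIntegral.integral_mono_on hab.le (hg_int.const_mul _) hsum_int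
    intro x hx
    have h2 := key2 x hx
    have h3 := hg_nonneg x hx
    nlinarith
  have hR : (∫ x in a..b, (f x * g x + f (a + b - x) * g x))
      ≤ ∫ x in a..b, (f a + f b) * g x := by
    apply intervalIntegral.integral_mono_on hab.le hsum_int (hg_int.const_mul _)
    intro x hx
    have h1 := key1 x hx
    have h3 := hg_nonneg x hx
    nlinarith
  have hadd : (∫ x in a..b, (f x * g x + f (a + b - x) * g x))
      = 2 * ∫ x in a..b, f x * g x := by
    rw [intervalIntegral.integral_add hfg_int h_fcg, hsub]; ring
  rw [hadd] at hL hR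
  rw [intervalIntegral.integral_const_mul] at hL hR
  constructor <;> linarith
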